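/- arXiv:2512.23179 — 2 statements merged into one kernel-verified Lean document; each statement's English description precedes it below -/
import Mathlib

section
/- The density f(x) = (1/π)·K₀(|x|) (for x ≠ 0) of the product of two independent standard normals is not log-concave on ℝ: there exist points x, y > 0 and λ ∈ (0,1) with f(λx + (1−λ)y) < f(x)^λ · f(y)^(1−λ). -/
open MeasureTheory

/-- Modified Bessel function of the second kind of order zero. -/
noncomputable def K0 (x : ℝ) : ℝ := ∫ t in Set.Ioi (0 : ℝ), Real.exp (-x * Real.cosh t)

lemma half_add_le_cosh {t : ℝ} (ht : 0 ≤ t) : (1 + t) / 2 ≤ Real.cosh t := by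
  rw [Real.cosh_eq]
  have h1 := Real.add_one_le_exp t
  have h2 := (Real.exp_pos (-t)).le
  linarith

lemma my_cosh_le_exp {t : ℝ} (ht : 0 ≤ t) : Real.cosh t ≤ Real.exp t := by
  rw [Real.cosh_eq]
  have h2 : Real.exp (-t) ≤ Real.exp t := Real.exp_le_exp.2 (by linarith)
  linarith

lemma K0_integrableOn {r : ℝ} (hr : 0 < r) :
    IntegrableOn (fun t ↦ Real.exp (-r * Real.cosh t)) (Set.Ioi 0) := by
  have hg : IntegrableOn (fun t ↦ Real.exp (-(r/2) * t)) (Set.Ioi 0) :=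
    exp_neg_integrableOn_Ioi 0 (by linarith)
  refine Integrable.mono' hg ?_ ?_
  · exact (Real.continuous_exp.comp
      ((continuous_const.mul Real.continuous_cosh))).aestronglyMeasurable
  · filter_upwards [ae_restrict_mem measurableSet_Ioi] with t ht
    rw [Real.norm_eq_abs, Real.abs_exp]
    apply Real.exp_le_exp.2
    have h := half_add_le_cosh (le_of_lt (Set.mem_Ioi.1 ht))
    nlinarith [Set.mem_Ioi.1 ht]

lemma K0_nonneg (r : ℝ) : 0 ≤ K0 r := by
  apply setIntegral_nonneg measurableSet_Ioi
  intro t _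
  exact (Real.exp_pos _).le

lemma K0_upper {m : ℝ} (hm : 1 ≤ m) : K0 m ≤ 2 * Real.exp (-(1/2 : ℝ)) := by
  have hint : IntegrableOn (fun t ↦ Real.exp (-(1/2:ℝ)) * Real.exp (-(1/2) * t)) (Set.Ioi 0) :=
    (exp_neg_integrableOn_Ioi 0 (by norm_num : (0:ℝ) < 1/2)).const_mul _
  have hle : K0 m ≤ ∫ t in Set.Ioi (0:ℝ), Real.exp (-(1/2:ℝ)) * Real.exp (-(1/2) * t) := by
    apply setIntegral_mono_on (K0_integrableOn (by linarith)) hint measurableSet_Ioi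
    intro t ht
    rw [← Real.exp_add]
    apply Real.exp_le_exp.2
    have h := half_add_le_cosh (le_of_lt (Set.mem_Ioi.1 ht))
    have hc : 0 < Real.cosh t := Real.cosh_pos t
    nlinarith
  have hcomp : (∫ t in Set.Ioi (0:ℝ), Real.exp (-(1/2) * t)) = 2 := by
    have h := integral_comp_mul_left_Ioi (fun x ↦ Real.exp (-x)) 0
      (by norm_num : (0:ℝ) < 1/2)
    simp only [mul_zero] at h
    rw [show (fun t : ℝ ↦ Real.exp (-(1/2) * t)) = fun t : ℝ ↦ Real.exp (-(1/2 * t)) by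
      funext t; ring_nf]
    rw [h, integral_exp_neg_Ioi, neg_zero, Real.exp_zero, smul_eq_mul]
    norm_num
  calc K0 m ≤ ∫ t in Set.Ioi (0:ℝ), Real.exp (-(1/2:ℝ)) * Real.exp (-(1/2) * t) := hle
    _ = Real.exp (-(1/2:ℝ)) * ∫ t in Set.Ioi (0:ℝ), Real.exp (-(1/2) * t) :=
        integral_const_mul _ _
    _ = 2 * Real.exp (-(1/2:ℝ)) := by rw [hcomp]; ring

lemma K0_lower {r T : ℝ} (hr : 0 < r) (hT : 0 < T) :
    T * Real.exp (-r * Real.cosh T) ≤ K0 r := by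
  have h1 : (∫ t in Set.Ioc (0:ℝ) T, Real.exp (-r * Real.cosh t)) ≤ K0 r := by
    apply setIntegral_mono_set (K0_integrableOn hr)
    · filter_upwards with t using (Real.exp_pos _).le
    · exact HasSubset.Subset.eventuallyLE Set.Ioc_subset_Ioi_self
  refine le_trans ?_ h1
  have h2 : (∫ _t in Set.Ioc (0:ℝ) T, Real.exp (-r * Real.cosh T)) ≤
      ∫ t in Set.Ioc (0:ℝ) T, Real.exp (-r * Real.cosh t) := by
    apply setIntegral_mono_on
    · exact integrableOn_const measure_Ioc_lt_top.ne
    · exact (K0_integrableOn hr).mono_set Set.Ioc_subset_Ioi_self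
    · exact measurableSet_Ioc
    · intro t ht
      apply Real.exp_le_exp.2
      have hcc : Real.cosh t ≤ Real.cosh T := by
        rw [Real.cosh_le_cosh, abs_of_nonneg ht.1.le, abs_of_nonneg hT.le]
        exact ht.2
      nlinarith
  refine le_trans (le_of_eq ?_) h2
  rw [setIntegral_const, smul_eq_mul, measureReal_def, Real.volume_Ioc, ENNReal.toReal_ofReal (by linarith)]
  ring

theorem K0_density_not_logConcave :
    ∃ x y l : ℝ, 0 < x ∧ 0 < y ∧ 0 < l ∧ l < 1 ∧
      (1 / Real.pi) * K0 |l * x + (1 - l) * y| <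
        Real.rpow ((1 / Real.pi) * K0 |x|) l * Real.rpow ((1 / Real.pi) * K0 |y|) (1 - l) := by
  refine ⟨Real.exp (-210), 2, 1/2, Real.exp_pos _, by norm_num, by norm_num, by norm_num, ?_⟩
  have hx : (0:ℝ) < Real.exp (-210) := Real.exp_pos _
  set ε := Real.exp (-210) with hε
  set p := 1 / Real.pi with hp
  have hπ : 0 < Real.pi := Real.pi_pos
  have hp0 : 0 < p := by rw [hp]; positivity
  -- midpoint
  have hmabs : |(1/2 : ℝ) * ε + (1 - 1/2) * 2| = 1/2 * ε + (1 - 1/2) * 2 :=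
    abs_of_pos (by linarith)
  set C := K0 |(1/2 : ℝ) * ε + (1 - 1/2) * 2| with hCdef
  have hC : C ≤ 2 * Real.exp (-(1/2:ℝ)) := by
    rw [hCdef, hmabs]; exact K0_upper (by linarith)
  have hCnn : 0 ≤ C := K0_nonneg _
  -- lower bound A = K0 ε ≥ 100
  have hA : (100 : ℝ) ≤ K0 ε := by
    have h1 := K0_lower hx (show (0:ℝ) < 200 by norm_num)
    have h2 : ε * Real.cosh 200 ≤ Real.exp (-10) := by
      have hce := my_cosh_le_exp (show (0:ℝ) ≤ 200 by norm_num)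
      calc ε * Real.cosh 200 ≤ ε * Real.exp 200 := mul_le_mul_of_nonneg_left hce hx.le
        _ = Real.exp (-10) := by rw [hε, ← Real.exp_add]; norm_num
    have h3 : Real.exp (-10 : ℝ) ≤ 1/2 := by
      have hprod : Real.exp (-10:ℝ) * Real.exp 10 = 1 := by rw [← Real.exp_add]; norm_num
      nlinarith [Real.add_one_le_exp (10:ℝ), Real.exp_pos (-10:ℝ)]
    have h4 : (1/2 : ℝ) ≤ Real.exp (-(ε * Real.cosh 200)) := by
      have h5 := Real.add_one_le_exp (-(ε * Real.cosh 200))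
      linarith
    have h6 : -ε * Real.cosh 200 = -(ε * Real.cosh 200) := by ring
    rw [h6] at h1
    nlinarith
  have hApos : (0:ℝ) < K0 ε := by linarith
  -- lower bound B = K0 2 ≥ 1/55
  have hB : (1/55 : ℝ) ≤ K0 2 := by
    have h1 := K0_lower (show (0:ℝ) < 2 by norm_num) one_pos
    have hcosh1 : Real.cosh 1 ≤ 2 := by
      rw [Real.cosh_eq]
      have h2 : Real.exp 1 < 2.7182818286 := Real.exp_one_lt_d9
      have h3 : Real.exp (-1 : ℝ) ≤ 1 := Real.exp_le_one_iff.2 (by norm_num)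
      linarith
    have h4 : Real.exp (-4 : ℝ) ≤ Real.exp (-2 * Real.cosh 1) :=
      Real.exp_le_exp.2 (by nlinarith)
    have h55 : Real.exp (4:ℝ) ≤ 55 := by
      have e1 : Real.exp 1 < 2.7182818286 := Real.exp_one_lt_d9
      have e2 : Real.exp 2 < 7.39 := by
        rw [show (2:ℝ) = 1 + 1 by norm_num, Real.exp_add]
        nlinarith [Real.exp_pos 1]
      rw [show (4:ℝ) = 2 + 2 by norm_num, Real.exp_add]
      nlinarith [Real.exp_pos 2]
    have h5 : (1/55 : ℝ) ≤ Real.exp (-4 : ℝ) := by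
      have hprod : Real.exp (-4:ℝ) * Real.exp 4 = 1 := by rw [← Real.exp_add]; norm_num
      nlinarith [Real.exp_pos (-4:ℝ)]
    linarith
  have hBpos : (0:ℝ) < K0 2 := by linarith
  -- key strict inequality on squares
  have hE1 : Real.exp (-1:ℝ) < 0.37 := by
    have hprod : Real.exp (-1:ℝ) * Real.exp 1 = 1 := by rw [← Real.exp_add]; norm_num
    nlinarith [Real.exp_one_gt_d9, Real.exp_pos (-1:ℝ)]
  have hexpadd : Real.exp (-(1/2:ℝ)) * Real.exp (-(1/2:ℝ)) = Real.exp (-1) := by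
    rw [← Real.exp_add]; norm_num
  have hCC : C * C ≤ 2 * Real.exp (-(1/2:ℝ)) * (2 * Real.exp (-(1/2:ℝ))) :=
    mul_le_mul hC hC hCnn (by positivity)
  have hAB : (100 : ℝ) * (1/55) ≤ K0 ε * K0 2 :=
    mul_le_mul hA hB (by norm_num) hApos.le
  have hCsq : C * C < K0 ε * K0 2 := by nlinarith
  have key : p * C < Real.sqrt (p * K0 ε * (p * K0 2)) := by
    rw [show p * K0 ε * (p * K0 2) = p * p * (K0 ε * K0 2) by ring]
    refine (Real.lt_sqrt (by positivity)).2 ?_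
    calc (p * C) ^ 2 = p * p * (C * C) := by ring
      _ < p * p * (K0 ε * K0 2) := by
          exact mul_lt_mul_of_pos_left hCsq (mul_pos hp0 hp0)
  have habs2 : |(2:ℝ)| = 2 := by norm_num
  have habsε : |ε| = ε := abs_of_pos hx
  rw [habs2, habsε, show (1:ℝ) - 1/2 = 1/2 by norm_num]
  calc p * C < Real.sqrt (p * K0 ε * (p * K0 2)) := key
    _ = Real.sqrt (p * K0 ε) * Real.sqrt (p * K0 2) := Real.sqrt_mul (by positivity) _
    _ = Real.rpow (p * K0 ε) (1/2) * Real.rpow (p * K0 2) (1/2) := by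
        rw [Real.sqrt_eq_rpow, Real.sqrt_eq_rpow]; rfl
end

section
/- The convolution of two log-concave integrable functions on ℝ is log-concave: if f, g : ℝ → ℝ≥0 are log-concave and integrable, then (f ∗ g)(x) = ∫ f(x−y)g(y) dy is log-concave. -/
open MeasureTheory

/-- `f` is log-concave: `f (λx + (1-λ)y) ≥ f x ^ λ * f y ^ (1-λ)`. -/
def IsLogConcave (f : ℝ → ℝ) : Prop :=
  ∀ x y l : ℝ, 0 ≤ l → l ≤ 1 →
    Real.rpow (f x) l * Real.rpow (f y) (1 - l) ≤ f (l * x + (1 - l) * y)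

open Set Filter Topology Pointwise
open scoped ENNReal

lemma bm_compact {K L : Set ℝ} (hK : IsCompact K) (hL : IsCompact L)
    (hKne : K.Nonempty) (hLne : L.Nonempty) :
    volume K + volume L ≤ volume (K + L) := by
  set a := sSup K with ha
  set b := sInf L with hb
  have haK : a ∈ K := hK.sSup_mem hKne
  have hbL : b ∈ L := hL.sInf_mem hLne
  set K' : Set ℝ := (fun x => x - b) ⁻¹' K with hK'
  set L' : Set ℝ := (fun x => x - a) ⁻¹' L with hL'
  have hK's : K' ⊆ K + L := by
    intro u hu
    have : (u - b) + b ∈ K + L := Set.add_mem_add hu hbL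
    simpa using this
  have hL's : L' ⊆ K + L := by
    intro u hu
    have : a + (u - a) ∈ K + L := Set.add_mem_add haK hu
    simpa using this
  have hμK' : volume K' = volume K := by
    simp [hK', sub_eq_add_neg, measure_preimage_add_right]
  have hμL' : volume L' = volume L := by
    simp [hL', sub_eq_add_neg, measure_preimage_add_right]
  have hinter : K' ∩ L' ⊆ {a + b} := by
    rintro u ⟨hu1, hu2⟩
    have h1 : u - b ≤ a := le_csSup hK.bddAbove hu1
    have h2 : b ≤ u - a := csInf_le hL.bddBelow hu2
    have : u = a + b := le_antisymm (by linarith) (by linarith)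
    simp [this]
  have hL'm : MeasurableSet L' := (measurable_sub_const a) (hL.isClosed.measurableSet)
  calc volume K + volume L = volume K' + volume L' := by rw [hμK', hμL']
    _ = volume (K' ∪ L') + volume (K' ∩ L') := (measure_union_add_inter K' hL'm).symm
    _ ≤ volume (K + L) + volume ({a + b} : Set ℝ) :=
        add_le_add (measure_mono (union_subset hK's hL's)) (measure_mono hinter)
    _ = volume (K + L) := by simp

lemma bm_meas {A B : Set ℝ} (hA : MeasurableSet A) (hB : MeasurableSet B)
    (hAne : A.Nonempty) (hBne : B.Nonempty) :
    volume A + volume B ≤ volume (A + B) := by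
  obtain ⟨a₀, ha₀⟩ := hAne
  obtain ⟨b₀, hb₀⟩ := hBne
  -- infinite cases
  by_cases hAinf : volume A = ∞
  · have hsub : (fun x => x - b₀) ⁻¹' A ⊆ A + B := by
      intro u hu
      have : (u - b₀) + b₀ ∈ A + B := Set.add_mem_add hu hb₀
      simpa using this
    have : volume (A + B) = ∞ := by
      refine top_le_iff.1 ?_
      calc (∞ : ℝ≥0∞) = volume ((fun x => x - b₀) ⁻¹' A) := by
            simp [sub_eq_add_neg, measure_preimage_add_right, hAinf]
        _ ≤ volume (A + B) := measure_mono hsub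
    simp [this]
  by_cases hBinf : volume B = ∞
  · have hsub : (fun x => x - a₀) ⁻¹' B ⊆ A + B := by
      intro u hu
      have : a₀ + (u - a₀) ∈ A + B := Set.add_mem_add ha₀ hu
      simpa using this
    have : volume (A + B) = ∞ := by
      refine top_le_iff.1 ?_
      calc (∞ : ℝ≥0∞) = volume ((fun x => x - a₀) ⁻¹' B) := by
            simp [sub_eq_add_neg, measure_preimage_add_right, hBinf]
        _ ≤ volume (A + B) := measure_mono hsub
    simp [this]
  refine ENNReal.le_of_forall_pos_le_add fun ε hε _ => ?_
  have hε2 : ((ε : ℝ≥0∞) / 2) ≠ 0 := by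
    simp [ENNReal.div_eq_zero_iff, (by exact_mod_cast hε.ne' : (ε:ℝ≥0∞) ≠ 0)]
  obtain ⟨K, hKA, hKc, hKμ⟩ := hA.exists_isCompact_lt_add hAinf hε2
  obtain ⟨L, hLB, hLc, hLμ⟩ := hB.exists_isCompact_lt_add hBinf hε2
  set K' := insert a₀ K with hK'
  set L' := insert b₀ L with hL'
  have hK'c : IsCompact K' := hKc.insert a₀
  have hL'c : IsCompact L' := hLc.insert b₀
  have hK'A : K' ⊆ A := insert_subset ha₀ hKA
  have hL'B : L' ⊆ B := insert_subset hb₀ hLB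
  have h1 : volume A ≤ volume K' + ε / 2 :=
    le_trans hKμ.le (add_le_add_left (measure_mono (subset_insert _ _)) _)
  have h2 : volume B ≤ volume L' + ε / 2 :=
    le_trans hLμ.le (add_le_add_left (measure_mono (subset_insert _ _)) _)
  calc volume A + volume B ≤ (volume K' + volume L') + (ε / 2 + ε / 2) := by
        calc volume A + volume B ≤ (volume K' + ε/2) + (volume L' + ε/2) := add_le_add h1 h2
          _ = (volume K' + volume L') + (ε / 2 + ε / 2) := by ring
    _ ≤ volume (K' + L') + ε := by
        rw [ENNReal.add_halves]
        exact add_le_add_left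
          (bm_compact hK'c hL'c ⟨a₀, mem_insert _ _⟩ ⟨b₀, mem_insert _ _⟩) _
    _ ≤ volume (A + B) + ε := add_le_add_left (measure_mono (Set.add_subset_add hK'A hL'B)) _

lemma bm_scaled {A B : Set ℝ} {l : ℝ} (hl0 : 0 < l) (hl1 : l < 1)
    (hA : MeasurableSet A) (hB : MeasurableSet B)
    (hAne : A.Nonempty) (hBne : B.Nonempty) :
    ENNReal.ofReal l * volume A + ENNReal.ofReal (1 - l) * volume B
      ≤ volume (l • A + (1 - l) • B) := by
  have h1l : (0:ℝ) < 1 - l := by linarith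
  have hvA : volume (l • A) = ENNReal.ofReal l * volume A := by
    rw [Measure.addHaar_smul_of_nonneg volume hl0.le A]
    simp
  have hvB : volume ((1-l) • B) = ENNReal.ofReal (1-l) * volume B := by
    rw [Measure.addHaar_smul_of_nonneg volume h1l.le B]
    simp
  rw [← hvA, ← hvB]
  exact bm_meas (hA.const_smul₀ l) (hB.const_smul₀ (1-l))
    (hAne.smul_set) (hBne.smul_set)

lemma level_approx {f : ℝ → ℝ} (hfm : AEMeasurable f volume) (t : ℝ) (x₀ : ℝ) (hx₀ : t < f x₀) :
    ∃ A : Set ℝ, MeasurableSet A ∧ A.Nonempty ∧ (∀ x ∈ A, t < f x) ∧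
      volume {x | t < f x} ≤ volume A := by
  set S := toMeasurable volume {x | f x ≠ hfm.mk f x} with hSdef
  have hS0 : volume S = 0 := by
    rw [hSdef, measure_toMeasurable]
    exact ae_iff.1 hfm.ae_eq_mk
  have hSsub : {x | f x ≠ hfm.mk f x} ⊆ S := subset_toMeasurable _ _
  set D := {x | t < hfm.mk f x} \ S with hDdef
  have hDm : MeasurableSet D :=
    (measurableSet_lt measurable_const hfm.measurable_mk).diff (measurableSet_toMeasurable _ _)
  refine ⟨insert x₀ D, hDm.insert x₀, ⟨x₀, mem_insert _ _⟩, ?_, ?_⟩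
  · rintro x (rfl | ⟨hx1, hx2⟩)
    · exact hx₀
    · have : f x = hfm.mk f x := by
        by_contra hne
        exact hx2 (hSsub hne)
      rw [this]; exact hx1
  · have hsub : {x | t < f x} ⊆ D ∪ S := by
      intro x hx
      by_cases hxS : x ∈ S
      · exact Or.inr hxS
      · refine Or.inl ⟨?_, hxS⟩
        have : f x = hfm.mk f x := by
          by_contra hne
          exact hxS (hSsub hne)
        simp only [mem_setOf_eq, ← this]; exact hx
    calc volume {x | t < f x} ≤ volume (D ∪ S) := measure_mono hsub
      _ ≤ volume D + volume S := measure_union_le _ _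
      _ = volume D := by rw [hS0, add_zero]
      _ ≤ volume (insert x₀ D) := measure_mono (subset_insert _ _)

lemma pl_core {f g h : ℝ → ℝ} {l : ℝ} (hl0 : 0 < l) (hl1 : l < 1)
    (hf0 : ∀ x, 0 ≤ f x) (hg0 : ∀ x, 0 ≤ g x) (hh0 : ∀ x, 0 ≤ h x)
    (hfm : AEMeasurable f volume) (hgm : AEMeasurable g volume) (hhm : AEMeasurable h volume)
    (hfle : ∀ x, f x ≤ 1) (hgle : ∀ x, g x ≤ 1)
    (hfsup : ∀ t : ℝ, t < 1 → ∃ x, t < f x) (hgsup : ∀ t : ℝ, t < 1 → ∃ x, t < g x)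
    (hyp : ∀ x y, f x ^ l * g y ^ (1 - l) ≤ h (l * x + (1 - l) * y)) :
    ENNReal.ofReal l * (∫⁻ x, ENNReal.ofReal (f x)) +
      ENNReal.ofReal (1 - l) * (∫⁻ x, ENNReal.ofReal (g x)) ≤ ∫⁻ x, ENNReal.ofReal (h x) := by
  have h1l : (0:ℝ) < 1 - l := by linarith
  have key : ∀ t ∈ Ioo (0:ℝ) 1,
      ENNReal.ofReal l * volume {x | t < f x} + ENNReal.ofReal (1 - l) * volume {x | t < g x}
        ≤ volume {x | t < h x} := by
    intro t ht
    obtain ⟨xf, hxf⟩ := hfsup t ht.2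
    obtain ⟨xg, hxg⟩ := hgsup t ht.2
    obtain ⟨A, hAm, hAne, hAlt, hAv⟩ := level_approx hfm t xf hxf
    obtain ⟨B, hBm, hBne, hBlt, hBv⟩ := level_approx hgm t xg hxg
    have incl : l • A + (1 - l) • B ⊆ {x | t < h x} := by
      rintro z ⟨u, hu, v, hv, rfl⟩
      obtain ⟨x, hx, rfl⟩ := hu
      obtain ⟨y, hy, rfl⟩ := hv
      have htt : t ^ l * t ^ (1 - l) = t := by
        rw [← Real.rpow_add ht.1]; norm_num
      have hlt : t < f x ^ l * g y ^ (1 - l) := by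
        calc t = t ^ l * t ^ (1 - l) := htt.symm
          _ < f x ^ l * g y ^ (1 - l) :=
            mul_lt_mul'' (Real.rpow_lt_rpow ht.1.le (hAlt x hx) hl0)
              (Real.rpow_lt_rpow ht.1.le (hBlt y hy) h1l)
              (Real.rpow_nonneg ht.1.le _) (Real.rpow_nonneg ht.1.le _)
      show t < h (l • x + (1 - l) • y)
      simp only [smul_eq_mul]
      exact hlt.trans_le (hyp x y)
    calc ENNReal.ofReal l * volume {x | t < f x} + ENNReal.ofReal (1 - l) * volume {x | t < g x}
        ≤ ENNReal.ofReal l * volume A + ENNReal.ofReal (1 - l) * volume B :=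
          add_le_add (mul_le_mul_right hAv _) (mul_le_mul_right hBv _)
      _ ≤ volume (l • A + (1 - l) • B) := bm_scaled hl0 hl1 hAm hBm hAne hBne
      _ ≤ volume {x | t < h x} := measure_mono incl
  have meas_f : Measurable (fun t : ℝ => volume {x | t < f x}) :=
    Antitone.measurable (fun s t hst => measure_mono (fun x hx => lt_of_le_of_lt hst hx))
  have meas_g : Measurable (fun t : ℝ => volume {x | t < g x}) :=
    Antitone.measurable (fun s t hst => measure_mono (fun x hx => lt_of_le_of_lt hst hx))
  have hIoi : Ioi (0:ℝ) = Ioo 0 1 ∪ Ici 1 := by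
    ext s
    simp only [mem_Ioi, mem_union, mem_Ioo, mem_Ici]
    constructor
    · intro hs
      rcases lt_or_ge s 1 with h' | h'
      · exact Or.inl ⟨hs, h'⟩
      · exact Or.inr h'
    · rintro (⟨h1, _⟩ | h1)
      · exact h1
      · linarith
  have hdisj : Disjoint (Ioo (0:ℝ) 1) (Ici 1) := by
    rw [Set.disjoint_left]
    exact fun s hs hs' => hs.2.not_ge hs'
  have split : ∀ φ : ℝ → ℝ≥0∞,
      ∫⁻ t in Ioi (0:ℝ), φ t = (∫⁻ t in Ioo 0 1, φ t) + ∫⁻ t in Ici 1, φ t := by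
    intro φ
    rw [hIoi, lintegral_union measurableSet_Ici hdisj]
  have tail0 : ∀ φ : ℝ → ℝ, (∀ x, φ x ≤ 1) → ∫⁻ t in Ici (1:ℝ), volume {x | t < φ x} = 0 := by
    intro φ hφ
    have : ∀ᵐ t ∂(volume.restrict (Ici (1:ℝ))), volume {x | t < φ x} = 0 := by
      filter_upwards [ae_restrict_mem measurableSet_Ici] with t ht
      have : {x | t < φ x} = ∅ := by
        ext x
        simp only [mem_setOf_eq, mem_empty_iff_false, iff_false, not_lt]
        exact (hφ x).trans ht
      simp [this]
    calc ∫⁻ t in Ici (1:ℝ), volume {x | t < φ x}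
        = ∫⁻ _ in Ici (1:ℝ), (0:ℝ≥0∞) := lintegral_congr_ae this
      _ = 0 := by simp
  have lcf : ∫⁻ x, ENNReal.ofReal (f x) = ∫⁻ t in Ioo (0:ℝ) 1, volume {x | t < f x} := by
    rw [lintegral_eq_lintegral_meas_lt volume (Eventually.of_forall hf0) hfm,
      split, tail0 f hfle, add_zero]
  have lcg : ∫⁻ x, ENNReal.ofReal (g x) = ∫⁻ t in Ioo (0:ℝ) 1, volume {x | t < g x} := by
    rw [lintegral_eq_lintegral_meas_lt volume (Eventually.of_forall hg0) hgm,
      split, tail0 g hgle, add_zero]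
  have lch : ∫⁻ t in Ioo (0:ℝ) 1, volume {x | t < h x} ≤ ∫⁻ x, ENNReal.ofReal (h x) := by
    rw [lintegral_eq_lintegral_meas_lt volume (Eventually.of_forall hh0) hhm]
    exact lintegral_mono_set (fun s hs => hs.1)
  calc ENNReal.ofReal l * (∫⁻ x, ENNReal.ofReal (f x)) +
        ENNReal.ofReal (1 - l) * (∫⁻ x, ENNReal.ofReal (g x))
      = ∫⁻ t in Ioo (0:ℝ) 1, (ENNReal.ofReal l * volume {x | t < f x}
          + ENNReal.ofReal (1 - l) * volume {x | t < g x}) := by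
        rw [lcf, lcg, lintegral_add_left (meas_f.const_mul _),
          lintegral_const_mul _ meas_f, lintegral_const_mul _ meas_g]
    _ ≤ ∫⁻ t in Ioo (0:ℝ) 1, volume {x | t < h x} := by
        refine lintegral_mono_ae ?_
        filter_upwards [ae_restrict_mem measurableSet_Ioo] with t ht
        exact key t ht
    _ ≤ ∫⁻ x, ENNReal.ofReal (h x) := lch

lemma pl_bounded {f g h : ℝ → ℝ} {l : ℝ} (hl0 : 0 < l) (hl1 : l < 1)
    (hf0 : ∀ x, 0 ≤ f x) (hg0 : ∀ x, 0 ≤ g x) (hh0 : ∀ x, 0 ≤ h x)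
    (hfi : Integrable f) (hgi : Integrable g) (hhm : AEMeasurable h volume)
    (hfb : BddAbove (Set.range f)) (hgb : BddAbove (Set.range g))
    (hyp : ∀ x y, f x ^ l * g y ^ (1 - l) ≤ h (l * x + (1 - l) * y)) :
    ENNReal.ofReal ((∫ x, f x) ^ l * (∫ x, g x) ^ (1 - l)) ≤ ∫⁻ x, ENNReal.ofReal (h x) := by
  have h1l : (0:ℝ) < 1 - l := by linarith
  set Mf := sSup (Set.range f) with hMf
  set Mg := sSup (Set.range g) with hMg
  have hfleM : ∀ x, f x ≤ Mf := fun x => le_csSup hfb (mem_range_self x)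
  have hgleM : ∀ x, g x ≤ Mg := fun x => le_csSup hgb (mem_range_self x)
  have hMf0 : 0 ≤ Mf := (hf0 0).trans (hfleM 0)
  have hMg0 : 0 ≤ Mg := (hg0 0).trans (hgleM 0)
  rcases hMf0.eq_or_lt with hMf0' | hMf0'
  · have hfz : ∀ x, f x = 0 := fun x => le_antisymm ((hfleM x).trans hMf0'.symm.le) (hf0 x)
    have : (∫ x, f x) = 0 := by simp [funext hfz]
    rw [this, Real.zero_rpow hl0.ne', zero_mul, ENNReal.ofReal_zero]
    exact zero_le
  rcases hMg0.eq_or_lt with hMg0' | hMg0'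
  · have hgz : ∀ x, g x = 0 := fun x => le_antisymm ((hgleM x).trans hMg0'.symm.le) (hg0 x)
    have : (∫ x, g x) = 0 := by simp [funext hgz]
    rw [this, Real.zero_rpow h1l.ne', mul_zero, ENNReal.ofReal_zero]
    exact zero_le
  set M := Mf ^ l * Mg ^ (1 - l) with hMdef
  have hM0 : 0 < M := mul_pos (Real.rpow_pos_of_pos hMf0' _) (Real.rpow_pos_of_pos hMg0' _)
  set f1 : ℝ → ℝ := fun x => f x / Mf with hf1
  set g1 : ℝ → ℝ := fun x => g x / Mg with hg1
  set h1 : ℝ → ℝ := fun x => h x / M with hh1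
  have hf10 : ∀ x, 0 ≤ f1 x := fun x => div_nonneg (hf0 x) hMf0
  have hg10 : ∀ x, 0 ≤ g1 x := fun x => div_nonneg (hg0 x) hMg0
  have hh10 : ∀ x, 0 ≤ h1 x := fun x => div_nonneg (hh0 x) hM0.le
  have hf1le : ∀ x, f1 x ≤ 1 := fun x => (div_le_one hMf0').2 (hfleM x)
  have hg1le : ∀ x, g1 x ≤ 1 := fun x => (div_le_one hMg0').2 (hgleM x)
  have hf1sup : ∀ t : ℝ, t < 1 → ∃ x, t < f1 x := by
    intro t ht
    have : t * Mf < Mf := by nlinarith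
    obtain ⟨y, ⟨x, rfl⟩, hy⟩ := exists_lt_of_lt_csSup ⟨f 0, mem_range_self 0⟩ this
    exact ⟨x, (lt_div_iff₀ hMf0').2 hy⟩
  have hg1sup : ∀ t : ℝ, t < 1 → ∃ x, t < g1 x := by
    intro t ht
    have : t * Mg < Mg := by nlinarith
    obtain ⟨y, ⟨x, rfl⟩, hy⟩ := exists_lt_of_lt_csSup ⟨g 0, mem_range_self 0⟩ this
    exact ⟨x, (lt_div_iff₀ hMg0').2 hy⟩
  have hyp1 : ∀ x y, f1 x ^ l * g1 y ^ (1 - l) ≤ h1 (l * x + (1 - l) * y) := by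
    intro x y
    have hMfl : (0:ℝ) < Mf ^ l := Real.rpow_pos_of_pos hMf0' _
    have hMgl : (0:ℝ) < Mg ^ (1 - l) := Real.rpow_pos_of_pos hMg0' _
    have heq : f1 x ^ l * g1 y ^ (1 - l) = (f x ^ l * g y ^ (1 - l)) / M := by
      rw [hf1, hg1, hMdef]
      simp only []
      rw [Real.div_rpow (hf0 x) hMf0, Real.div_rpow (hg0 y) hMg0]
      field_simp
    rw [heq]
    show (f x ^ l * g y ^ (1 - l)) / M ≤ h (l * x + (1 - l) * y) / M
    gcongr
    exact hyp x y
  have hf1m : AEMeasurable f1 volume := hfi.aemeasurable.div_const Mf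
  have hg1m : AEMeasurable g1 volume := hgi.aemeasurable.div_const Mg
  have hh1m : AEMeasurable h1 volume := hhm.div_const M
  have core := pl_core hl0 hl1 hf10 hg10 hh10 hf1m hg1m hh1m hf1le hg1le hf1sup hg1sup hyp1
  have hf1i : Integrable f1 := hfi.div_const Mf
  have hg1i : Integrable g1 := hgi.div_const Mg
  have hint_f1 : ENNReal.ofReal (∫ x, f1 x) = ∫⁻ x, ENNReal.ofReal (f1 x) :=
    ofReal_integral_eq_lintegral_ofReal hf1i (Eventually.of_forall hf10)
  have hint_g1 : ENNReal.ofReal (∫ x, g1 x) = ∫⁻ x, ENNReal.ofReal (g1 x) :=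
    ofReal_integral_eq_lintegral_ofReal hg1i (Eventually.of_forall hg10)
  have hIf0 : 0 ≤ ∫ x, f x := integral_nonneg hf0
  have hIg0 : 0 ≤ ∫ x, g x := integral_nonneg hg0
  have hI1f0 : 0 ≤ ∫ x, f1 x := integral_nonneg hf10
  have hI1g0 : 0 ≤ ∫ x, g1 x := integral_nonneg hg10
  have hh1int : ∫⁻ x, ENNReal.ofReal (h1 x)
      = (∫⁻ x, ENNReal.ofReal (h x)) * ENNReal.ofReal M⁻¹ := by
    have hx : ∀ x, ENNReal.ofReal (h1 x) = ENNReal.ofReal (h x) * ENNReal.ofReal M⁻¹ := by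
      intro x
      rw [hh1]
      simp only [div_eq_mul_inv]
      rw [ENNReal.ofReal_mul (hh0 x)]
    simp_rw [hx]
    exact lintegral_mul_const'' _ hhm.ennreal_ofReal
  have amgm : (∫ x, f1 x) ^ l * (∫ x, g1 x) ^ (1 - l)
      ≤ l * (∫ x, f1 x) + (1 - l) * (∫ x, g1 x) :=
    Real.geom_mean_le_arith_mean2_weighted hl0.le h1l.le hI1f0 hI1g0 (by ring)
  have key2 : ENNReal.ofReal ((∫ x, f1 x) ^ l * (∫ x, g1 x) ^ (1 - l))
      ≤ (∫⁻ x, ENNReal.ofReal (h x)) * ENNReal.ofReal M⁻¹ := by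
    calc ENNReal.ofReal ((∫ x, f1 x) ^ l * (∫ x, g1 x) ^ (1 - l))
        ≤ ENNReal.ofReal (l * (∫ x, f1 x) + (1 - l) * (∫ x, g1 x)) :=
          ENNReal.ofReal_le_ofReal amgm
      _ = ENNReal.ofReal l * ENNReal.ofReal (∫ x, f1 x)
          + ENNReal.ofReal (1 - l) * ENNReal.ofReal (∫ x, g1 x) := by
          rw [ENNReal.ofReal_add (mul_nonneg hl0.le hI1f0) (mul_nonneg h1l.le hI1g0),
            ENNReal.ofReal_mul hl0.le, ENNReal.ofReal_mul h1l.le]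
      _ = ENNReal.ofReal l * (∫⁻ x, ENNReal.ofReal (f1 x))
          + ENNReal.ofReal (1 - l) * (∫⁻ x, ENNReal.ofReal (g1 x)) := by
          rw [hint_f1, hint_g1]
      _ ≤ ∫⁻ x, ENNReal.ofReal (h1 x) := core
      _ = (∫⁻ x, ENNReal.ofReal (h x)) * ENNReal.ofReal M⁻¹ := hh1int
  have hI1feq : ∫ x, f1 x = (∫ x, f x) / Mf := integral_div Mf f
  have hI1geq : ∫ x, g1 x = (∫ x, g x) / Mg := integral_div Mg g
  have hsplit : (∫ x, f x) ^ l * (∫ x, g x) ^ (1 - l)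
      = M * ((∫ x, f1 x) ^ l * (∫ x, g1 x) ^ (1 - l)) := by
    have hMfl : (0:ℝ) < Mf ^ l := Real.rpow_pos_of_pos hMf0' _
    have hMgl : (0:ℝ) < Mg ^ (1 - l) := Real.rpow_pos_of_pos hMg0' _
    rw [hI1feq, hI1geq, Real.div_rpow hIf0 hMf0, Real.div_rpow hIg0 hMg0, hMdef]
    field_simp
  rw [hsplit, ENNReal.ofReal_mul hM0.le]
  calc ENNReal.ofReal M * ENNReal.ofReal ((∫ x, f1 x) ^ l * (∫ x, g1 x) ^ (1 - l))
      ≤ ENNReal.ofReal M * ((∫⁻ x, ENNReal.ofReal (h x)) * ENNReal.ofReal M⁻¹) :=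
        mul_le_mul_right key2 _
    _ = (ENNReal.ofReal M * ENNReal.ofReal M⁻¹) * ∫⁻ x, ENNReal.ofReal (h x) := by ring
    _ = ∫⁻ x, ENNReal.ofReal (h x) := by
        rw [← ENNReal.ofReal_mul hM0.le, mul_inv_cancel₀ hM0.ne', ENNReal.ofReal_one, one_mul]

lemma pl_general {f g h : ℝ → ℝ} {l : ℝ} (hl0 : 0 < l) (hl1 : l < 1)
    (hf0 : ∀ x, 0 ≤ f x) (hg0 : ∀ x, 0 ≤ g x) (hh0 : ∀ x, 0 ≤ h x)
    (hfi : Integrable f) (hgi : Integrable g) (hhm : AEMeasurable h volume)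
    (hyp : ∀ x y, f x ^ l * g y ^ (1 - l) ≤ h (l * x + (1 - l) * y)) :
    ENNReal.ofReal ((∫ x, f x) ^ l * (∫ x, g x) ^ (1 - l)) ≤ ∫⁻ x, ENNReal.ofReal (h x) := by
  have h1l : (0:ℝ) < 1 - l := by linarith
  set F : ℕ → ℝ → ℝ := fun n x => min (f x) n with hF
  set G : ℕ → ℝ → ℝ := fun n x => min (g x) n with hG
  have hF0 : ∀ n x, 0 ≤ F n x := fun n x => le_min (hf0 x) (Nat.cast_nonneg n)
  have hG0 : ∀ n x, 0 ≤ G n x := fun n x => le_min (hg0 x) (Nat.cast_nonneg n)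
  have hFle : ∀ n x, F n x ≤ f x := fun n x => min_le_left _ _
  have hGle : ∀ n x, G n x ≤ g x := fun n x => min_le_left _ _
  have hFi : ∀ n, Integrable (F n) := by
    intro n
    refine hfi.mono' ((hfi.aemeasurable.min aemeasurable_const).aestronglyMeasurable) ?_
    exact Eventually.of_forall fun x => by
      rw [Real.norm_eq_abs, abs_of_nonneg (hF0 n x)]; exact hFle n x
  have hGi : ∀ n, Integrable (G n) := by
    intro n
    refine hgi.mono' ((hgi.aemeasurable.min aemeasurable_const).aestronglyMeasurable) ?_
    exact Eventually.of_forall fun x => by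
      rw [Real.norm_eq_abs, abs_of_nonneg (hG0 n x)]; exact hGle n x
  have hFb : ∀ n, BddAbove (Set.range (F n)) := by
    intro n
    exact ⟨n, by rintro y ⟨x, rfl⟩; exact min_le_right _ _⟩
  have hGb : ∀ n, BddAbove (Set.range (G n)) := by
    intro n
    exact ⟨n, by rintro y ⟨x, rfl⟩; exact min_le_right _ _⟩
  have hypn : ∀ n, ∀ x y, F n x ^ l * G n y ^ (1 - l) ≤ h (l * x + (1 - l) * y) := by
    intro n x y
    refine le_trans ?_ (hyp x y)
    exact mul_le_mul (Real.rpow_le_rpow (hF0 n x) (hFle n x) hl0.le)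
      (Real.rpow_le_rpow (hG0 n y) (hGle n y) h1l.le)
      (Real.rpow_nonneg (hG0 n y) _) (Real.rpow_nonneg (hf0 x) _)
  have key : ∀ n, ENNReal.ofReal ((∫ x, F n x) ^ l * (∫ x, G n x) ^ (1 - l))
      ≤ ∫⁻ x, ENNReal.ofReal (h x) := fun n =>
    pl_bounded hl0 hl1 (hF0 n) (hG0 n) hh0 (hFi n) (hGi n) hhm (hFb n) (hGb n) (hypn n)
  -- limits
  have hmono : ∀ φ : ℝ → ℝ, ∀ x : ℝ, Monotone fun n : ℕ => min (φ x) (n:ℝ) := by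
    intro φ x m n hmn
    exact min_le_min le_rfl (by exact_mod_cast hmn)
  have htendsF : Tendsto (fun n => ∫ x, F n x) atTop (𝓝 (∫ x, f x)) := by
    refine integral_tendsto_of_tendsto_of_monotone hFi hfi
      (Eventually.of_forall fun x => hmono f x) (Eventually.of_forall fun x => ?_)
    have : ∀ᶠ n : ℕ in atTop, F n x = f x := by
      filter_upwards [eventually_ge_atTop ⌈f x⌉₊] with n hn
      exact min_eq_left (by calc f x ≤ ⌈f x⌉₊ := Nat.le_ceil _
        _ ≤ n := by exact_mod_cast hn)
    exact Tendsto.congr' (this.mono fun n hn => hn.symm) tendsto_const_nhds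
  have htendsG : Tendsto (fun n => ∫ x, G n x) atTop (𝓝 (∫ x, g x)) := by
    refine integral_tendsto_of_tendsto_of_monotone hGi hgi
      (Eventually.of_forall fun x => hmono g x) (Eventually.of_forall fun x => ?_)
    have : ∀ᶠ n : ℕ in atTop, G n x = g x := by
      filter_upwards [eventually_ge_atTop ⌈g x⌉₊] with n hn
      exact min_eq_left (by calc g x ≤ ⌈g x⌉₊ := Nat.le_ceil _
        _ ≤ n := by exact_mod_cast hn)
    exact Tendsto.congr' (this.mono fun n hn => hn.symm) tendsto_const_nhds
  have htend : Tendsto (fun n => ENNReal.ofReal ((∫ x, F n x) ^ l * (∫ x, G n x) ^ (1 - l)))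
      atTop (𝓝 (ENNReal.ofReal ((∫ x, f x) ^ l * (∫ x, g x) ^ (1 - l)))) := by
    refine (ENNReal.continuous_ofReal.tendsto _).comp ?_
    exact (htendsF.rpow_const (Or.inr hl0.le)).mul (htendsG.rpow_const (Or.inr h1l.le))
  exact le_of_tendsto htend (Eventually.of_forall key)

lemma integral_seg {f : ℝ → ℝ} (hf0 : ∀ x, 0 ≤ f x) (hfi : Integrable f)
    {u v c : ℝ} (huv : u ≤ v) (hc : 0 ≤ c) (h : ∀ y ∈ Icc u v, c ≤ f y) :
    c * (v - u) ≤ ∫ x, f x := by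
  have h1 : c * (v - u) = ∫ _ in Icc u v, c := by
    rw [setIntegral_const, Real.volume_real_Icc_of_le huv, smul_eq_mul,
      mul_comm]
  rw [h1]
  calc ∫ _ in Icc u v, c ≤ ∫ y in Icc u v, f y := by
        refine setIntegral_mono_on (integrableOn_const ?_) hfi.integrableOn
          measurableSet_Icc h
        rw [Real.volume_Icc]
        exact ENNReal.ofReal_ne_top
    _ ≤ ∫ y, f y := setIntegral_le_integral hfi (Eventually.of_forall hf0)

lemma rpow_seg_bound {a K t : ℝ} (ha : 0 < a) (haK : a ≤ K) (ht1 : 1/2 ≤ t) (ht2 : t ≤ 1) :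
    a * (K / a) ^ ((1:ℝ)/2) ≤ K ^ t * a ^ (1 - t) := by
  have hK : 0 < K := ha.trans_le haK
  have e1 : K ^ t * a ^ (1 - t) = a * (K / a) ^ t := by
    rw [Real.div_rpow hK.le ha.le, Real.rpow_sub ha, Real.rpow_one]
    field_simp
  rw [e1]
  have h2 : (K / a) ^ ((1:ℝ)/2) ≤ (K / a) ^ t :=
    Real.rpow_le_rpow_of_exponent_le ((one_le_div ha).2 haK) ht1
  nlinarith [Real.rpow_nonneg (div_nonneg hK.le ha.le) ((1:ℝ)/2)]

lemma logconcave_bounded {f : ℝ → ℝ} (hf0 : ∀ x, 0 ≤ f x) (hf : IsLogConcave f)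
    (hfi : Integrable f) : ∃ M : ℝ, 0 ≤ M ∧ ∀ x, f x ≤ M := by
  have hf' : ∀ x y t : ℝ, 0 ≤ t → t ≤ 1 →
      f x ^ t * f y ^ (1 - t) ≤ f (t * x + (1 - t) * y) := hf
  by_cases hpq : ∃ p q, p < q ∧ 0 < f p ∧ 0 < f q
  swap
  · -- at most one point where f > 0
    by_cases hex : ∃ p, 0 < f p
    · obtain ⟨p, hp⟩ := hex
      refine ⟨f p, (hf0 p), fun x => ?_⟩
      by_contra hx
      push_neg at hx
      have hfx : 0 < f x := hp.trans hx
      rcases lt_trichotomy p x with h | h | h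
      · exact hpq ⟨p, x, h, hp, hfx⟩
      · rw [h] at hx; exact lt_irrefl _ hx
      · exact hpq ⟨x, p, h, hfx, hp⟩
    · push_neg at hex
      exact ⟨0, le_rfl, fun x => hex x⟩
  obtain ⟨p, q, hpq', hp, hq⟩ := hpq
  set a := min (f p) (f q) with hadef
  have ha : 0 < a := lt_min hp hq
  set D := q - p with hD
  have hD0 : 0 < D := by simp [hD]; linarith
  set I := ∫ x, f x with hI
  have hI0 : 0 ≤ I := integral_nonneg hf0
  -- helper: for base b and x with f b ≥ a, f x ≥ a, |x-b| ≥ D/2: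
  have helper : ∀ b x : ℝ, a ≤ f b → a ≤ f x → D / 2 ≤ |x - b| →
      a * ((f x / a) ^ ((1:ℝ)/2)) * (D / 4) ≤ I := by
    intro b x hb hx hdist
    set K := f x with hK
    have haK : a ≤ K := hx
    have hc0 : 0 ≤ a * ((K / a) ^ ((1:ℝ)/2)) :=
      mul_nonneg ha.le (Real.rpow_nonneg (div_nonneg (ha.le.trans haK) ha.le) _)
    rcases lt_trichotomy b x with hbx | hbx | hbx
    · -- b < x, use J = Icc ((b+x)/2) x
      have hxb : 0 < x - b := by linarith
      have hseg : ∀ y ∈ Icc ((b+x)/2) x, a * ((K / a) ^ ((1:ℝ)/2)) ≤ f y := by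
        intro y hy
        set t := (y - b) / (x - b) with ht
        have ht1 : 1/2 ≤ t := by
          rw [ht, le_div_iff₀ hxb]
          have := hy.1
          linarith
        have ht2 : t ≤ 1 := by
          rw [ht, div_le_one hxb]
          have := hy.2
          linarith
        have hyeq : t * x + (1 - t) * b = y := by
          rw [ht]
          field_simp
          ring
        have h1 := hf' x b t (by linarith) ht2
        rw [hyeq] at h1
        refine le_trans ?_ h1
        calc a * ((K / a) ^ ((1:ℝ)/2)) ≤ K ^ t * a ^ (1 - t) :=
              rpow_seg_bound ha haK ht1 ht2
          _ ≤ f x ^ t * f b ^ (1 - t) := by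
              refine mul_le_mul ?_ ?_ (Real.rpow_nonneg ha.le _) (Real.rpow_nonneg (hf0 x) _)
              · exact le_of_eq rfl
              · exact Real.rpow_le_rpow ha.le hb (by linarith)
      have hlen : D / 4 ≤ (x - (b+x)/2) := by
        rw [abs_of_pos hxb] at hdist
        linarith
      calc a * ((K / a) ^ ((1:ℝ)/2)) * (D / 4)
          ≤ a * ((K / a) ^ ((1:ℝ)/2)) * (x - (b+x)/2) := by
            exact mul_le_mul_of_nonneg_left hlen hc0
        _ ≤ I := integral_seg hf0 hfi (by linarith) hc0 hseg
    · -- b = x : impossible since D/2 > 0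
      exfalso
      rw [hbx] at hdist
      simp at hdist
      linarith
    · -- x < b, use J = Icc x ((b+x)/2)
      have hxb : 0 < b - x := by linarith
      have hseg : ∀ y ∈ Icc x ((b+x)/2), a * ((K / a) ^ ((1:ℝ)/2)) ≤ f y := by
        intro y hy
        set t := (b - y) / (b - x) with ht
        have ht1 : 1/2 ≤ t := by
          rw [ht, le_div_iff₀ hxb]
          have := hy.2
          linarith
        have ht2 : t ≤ 1 := by
          rw [ht, div_le_one hxb]
          have := hy.1
          linarith
        have hyeq : t * x + (1 - t) * b = y := by
          rw [ht]
          field_simp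
          ring
        have h1 := hf' x b t (by linarith) ht2
        rw [hyeq] at h1
        refine le_trans ?_ h1
        calc a * ((K / a) ^ ((1:ℝ)/2)) ≤ K ^ t * a ^ (1 - t) :=
              rpow_seg_bound ha haK ht1 ht2
          _ ≤ f x ^ t * f b ^ (1 - t) := by
              refine mul_le_mul ?_ ?_ (Real.rpow_nonneg ha.le _) (Real.rpow_nonneg (hf0 x) _)
              · exact le_of_eq rfl
              · exact Real.rpow_le_rpow ha.le hb (by linarith)
      have hlen : D / 4 ≤ ((b+x)/2 - x) := by
        rw [abs_of_neg (by linarith : x - b < 0)] at hdist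
        linarith
      calc a * ((K / a) ^ ((1:ℝ)/2)) * (D / 4)
          ≤ a * ((K / a) ^ ((1:ℝ)/2)) * ((b+x)/2 - x) := by
            exact mul_le_mul_of_nonneg_left hlen hc0
        _ ≤ I := integral_seg hf0 hfi (by linarith) hc0 hseg
  -- conclusion
  refine ⟨max a (a * (4 * I / (D * a)) ^ 2), le_max_of_le_left ha.le, fun x => ?_⟩
  by_cases hxa : f x ≤ a
  · exact le_max_of_le_left hxa
  push_neg at hxa
  have hx : a ≤ f x := hxa.le
  -- choose base point
  have hbase : ∃ b, a ≤ f b ∧ D / 2 ≤ |x - b| := by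
    rcases le_total x ((p + q)/2) with hside | hside
    · refine ⟨q, min_le_right _ _, ?_⟩
      rw [abs_sub_comm, abs_of_pos (by simp [hD] at hD0; linarith)]
      simp only [hD]
      linarith
    · refine ⟨p, min_le_left _ _, ?_⟩
      rw [abs_of_pos (by simp [hD] at hD0; linarith)]
      simp only [hD]
      linarith
  obtain ⟨b, hb, hdist⟩ := hbase
  have hmain := helper b x hb hx hdist
  -- a * (f x / a)^(1/2) * (D/4) ≤ I  ⟹  f x ≤ a * (4I/(D a))^2
  set s := (f x / a) ^ ((1:ℝ)/2) with hs
  have hs0 : 0 ≤ s := Real.rpow_nonneg (div_nonneg (hf0 x) ha.le) _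
  have hsle : s ≤ 4 * I / (D * a) := by
    rw [le_div_iff₀ (by positivity : (0:ℝ) < D * a)]
    nlinarith
  have hsq : s ^ 2 = f x / a := by
    rw [hs, ← Real.rpow_natCast ((f x / a) ^ ((1:ℝ)/2)) 2, ← Real.rpow_mul (div_nonneg (hf0 x) ha.le)]
    norm_num
  have : f x / a ≤ (4 * I / (D * a)) ^ 2 := by
    rw [← hsq]
    exact pow_le_pow_left₀ hs0 hsle 2
  have hfinal : f x ≤ a * (4 * I / (D * a)) ^ 2 := by
    rw [div_le_iff₀ ha] at this
    linarith [this]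
  exact le_max_of_le_right hfinal

theorem convolution_logConcave (f g : ℝ → ℝ)
    (hf0 : ∀ x, 0 ≤ f x) (hg0 : ∀ x, 0 ≤ g x)
    (hf : IsLogConcave f) (hg : IsLogConcave g)
    (hfi : Integrable f) (hgi : Integrable g) :
    IsLogConcave (fun x => ∫ y, f (x - y) * g y) := by
  intro x y l hl0 hl1
  simp only [Real.rpow_eq_pow]
  rcases eq_or_lt_of_le hl0 with rfl | hl0'
  · simp only [Real.rpow_zero, one_mul, sub_zero, Real.rpow_one, zero_mul, zero_add, one_mul]
    exact le_rfl
  rcases eq_or_lt_of_le hl1 with rfl | hl1'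
  · simp only [Real.rpow_one, sub_self, Real.rpow_zero, mul_one, one_mul, zero_mul, add_zero]
    exact le_rfl
  -- 0 < l < 1
  obtain ⟨Mf, hMf0, hMf⟩ := logconcave_bounded hf0 hf hfi
  set z := l * x + (1 - l) * y with hz
  -- integrand family
  have hF0 : ∀ z w : ℝ, 0 ≤ f (z - w) * g w := fun z w => mul_nonneg (hf0 _) (hg0 _)
  have hFsm : ∀ z : ℝ, AEStronglyMeasurable (fun w => f (z - w) * g w) volume := by
    intro z
    exact ((hfi.comp_sub_left z).aestronglyMeasurable).mul hgi.aestronglyMeasurable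
  have hFi : ∀ z : ℝ, Integrable (fun w => f (z - w) * g w) := by
    intro z
    refine (hgi.const_mul Mf).mono' (hFsm z) (Eventually.of_forall fun w => ?_)
    rw [Real.norm_eq_abs, abs_of_nonneg (hF0 z w)]
    exact mul_le_mul_of_nonneg_right (hMf _) (hg0 w)
  -- hypothesis of PL
  have hyp : ∀ u v : ℝ, (f (x - u) * g u) ^ l * (f (y - v) * g v) ^ (1 - l)
      ≤ f (z - (l * u + (1 - l) * v)) * g (l * u + (1 - l) * v) := by
    intro u v
    have harg : z - (l * u + (1 - l) * v) = l * (x - u) + (1 - l) * (y - v) := by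
      rw [hz]; ring
    have e1 : (f (x - u) * g u) ^ l * (f (y - v) * g v) ^ (1 - l)
        = (f (x - u) ^ l * f (y - v) ^ (1 - l)) * (g u ^ l * g v ^ (1 - l)) := by
      rw [Real.mul_rpow (hf0 _) (hg0 _), Real.mul_rpow (hf0 _) (hg0 _)]
      ring
    rw [e1, harg]
    exact mul_le_mul (hf (x - u) (y - v) l hl0 hl1) (hg u v l hl0 hl1)
      (mul_nonneg (Real.rpow_nonneg (hg0 _) _) (Real.rpow_nonneg (hg0 _) _))
      (hf0 _)
  have hPL := pl_general hl0' hl1' (hF0 x) (hF0 y) (hF0 z) (hFi x) (hFi y)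
    (hFsm z).aemeasurable hyp
  have hzint : ENNReal.ofReal (∫ w, f (z - w) * g w) = ∫⁻ w, ENNReal.ofReal (f (z - w) * g w) :=
    ofReal_integral_eq_lintegral_ofReal (hFi z) (Eventually.of_forall (hF0 z))
  rw [← hzint] at hPL
  exact (ENNReal.ofReal_le_ofReal_iff (integral_nonneg (hF0 z))).1 hPL
end
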